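/- Let n ≥ 2, let p₁ < p₂ < ⋯ < pₙ < 0 be reals and w₁, …, wₙ > 0. Define φ(x) := Σ_{i=1}^n w_i·x^{p_i−1} for x > 0 (so φ is a strictly decreasing bijection of (0,∞) onto (0,∞)), let I₁ : (0,∞) → (0,∞) be its inverse (φ(I₁(z)) = z for all z > 0), and let I₂(z) := (z/wₙ)^{1/(pₙ−1)}. Then for every β ∈ [0,1) with β > 1 + p_{n−1} − pₙ, there exists K > 0 such that for all z > 0: |I₁(z) − I₂(z)| ≤ K·(1 + z^{β/(pₙ−1)}). -/

import Mathlib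

set_option maxHeartbeats 1000000

/-- Proposition 2.13, inequality (1): the inverse `I₁` of `φ(x) = Σ wᵢ x^{pᵢ-1}` satisfies
`|I₁(z) - (z/wₙ)^{1/(pₙ-1)}| ≤ K(1 + z^{β/(pₙ-1)})` for any
`β ∈ [0,1)` with `β > 1 + p_{n-1} - pₙ`. -/
theorem linear_sharing_inverse_marginal_bound
    (n : ℕ) (hn : 2 ≤ n)
    (p : Fin n → ℝ) (hpmono : StrictMono p) (hpneg : ∀ i, p i < 0)
    (w : Fin n → ℝ) (hw : ∀ i, 0 < w i)
    (I₁ : ℝ → ℝ)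
    (hI₁ : ∀ z : ℝ, 0 < z → 0 < I₁ z ∧ (∑ i, w i * I₁ z ^ (p i - 1)) = z)
    (β : ℝ) (hβ0 : 0 ≤ β) (hβ1 : β < 1)
    (hβ2 : 1 + p ⟨n - 2, by omega⟩ - p ⟨n - 1, by omega⟩ < β) :
    ∃ K : ℝ, 0 < K ∧ ∀ z : ℝ, 0 < z →
      |I₁ z - (z / w ⟨n - 1, by omega⟩) ^ (1 / (p ⟨n - 1, by omega⟩ - 1))| ≤
        K * (1 + z ^ (β / (p ⟨n - 1, by omega⟩ - 1))) := by
  classical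
  set N : Fin n := ⟨n - 1, by omega⟩ with hNdef
  set M : Fin n := ⟨n - 2, by omega⟩ with hMdef
  set s : ℝ := p N - 1 with hsdef
  have hsneg : s < -1 := by have := hpneg N; simp only [hsdef]; linarith
  have hs0 : s < 0 := by linarith
  have hsne : s ≠ 0 := ne_of_lt hs0
  set W : ℝ := ∑ i, w i with hWdef
  have : Nonempty (Fin n) := ⟨N⟩
  have hWpos : 0 < W := Finset.sum_pos (fun i _ => hw i) Finset.univ_nonempty
  have hwN : 0 < w N := hw N
  set K : ℝ := 1 + (W / w N) / W ^ (β / s) with hKdef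
  have hKaux : 0 < (W / w N) / W ^ (β / s) :=
    div_pos (div_pos hWpos hwN) (Real.rpow_pos_of_pos hWpos _)
  have hK1 : 1 ≤ K := by rw [hKdef]; linarith
  have hKpos : 0 < K := by linarith
  refine ⟨K, hKpos, fun z hz => ?_⟩
  obtain ⟨hx, hφ⟩ := hI₁ z hz
  set x := I₁ z with hxdef
  have hzpow : 0 < z ^ (β / s) := Real.rpow_pos_of_pos hz _
  have hI2pos : 0 < (z / w N) ^ (1 / s) := Real.rpow_pos_of_pos (div_pos hz hwN) _
  by_cases hx1 : x ≤ 1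
  · -- easy case : x ≤ 1, both I₁ and I₂ lie in (0,1]
    have hxs1 : 1 ≤ x ^ s := Real.one_le_rpow_of_pos_of_le_one_of_nonpos hx hx1 hs0.le
    have hzwn : w N ≤ z := by
      have h1 : w N * x ^ s ≤ ∑ i, w i * x ^ (p i - 1) := by
        refine Finset.single_le_sum (f := fun i => w i * x ^ (p i - 1))
          (fun i _ => mul_nonneg (hw i).le (Real.rpow_nonneg hx.le _)) (Finset.mem_univ N)
      have : w N * 1 ≤ w N * x ^ s := by
        exact mul_le_mul_of_nonneg_left hxs1 hwN.le
      rw [hφ] at h1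
      linarith
    have hI2le : (z / w N) ^ (1 / s) ≤ 1 :=
      Real.rpow_le_one_of_one_le_of_nonpos ((one_le_div hwN).mpr hzwn)
        (div_nonpos_of_nonneg_of_nonpos zero_le_one hs0.le)
    have habs : |x - (z / w N) ^ (1 / s)| ≤ 1 := by
      rw [abs_le]; constructor <;> nlinarith
    calc |x - (z / w N) ^ (1 / s)| ≤ 1 := habs
      _ ≤ K := hK1
      _ ≤ K * (1 + z ^ (β / s)) := le_mul_of_one_le_right hKpos.le (by linarith)
  · -- hard case : x > 1
    push_neg at hx1
    have hxs : 0 < x ^ s := Real.rpow_pos_of_pos hx _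
    set R : ℝ := ∑ i ∈ Finset.univ.erase N, w i * x ^ (p i - 1) with hRdef
    have hsplit : z = w N * x ^ s + R := by
      rw [← hφ, hRdef, hsdef]
      rw [← Finset.add_sum_erase _ _ (Finset.mem_univ N)]
    have hR0 : 0 ≤ R := Finset.sum_nonneg (fun i _ => mul_nonneg (hw i).le (Real.rpow_nonneg hx.le _))
    have hRle : R ≤ W * x ^ (p M - 1) := by
      have h1 : R ≤ ∑ i ∈ Finset.univ.erase N, w i * x ^ (p M - 1) := by
        refine Finset.sum_le_sum (fun i hi => ?_)
        have hiN : i ≠ N := Finset.ne_of_mem_erase hi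
        have hile : i ≤ M := by
          rw [Fin.le_def]
          have : (i : ℕ) ≠ n - 1 := fun h => hiN (Fin.ext h)
          have := i.isLt
          simp only [hMdef]
          omega
        have : p i ≤ p M := hpmono.monotone hile
        exact mul_le_mul_of_nonneg_left
          (Real.rpow_le_rpow_of_exponent_le hx1.le (by linarith)) (hw i).le
      have h2 : ∑ i ∈ Finset.univ.erase N, w i * x ^ (p M - 1) ≤
          ∑ i, w i * x ^ (p M - 1) :=
        Finset.sum_le_sum_of_subset_of_nonneg (Finset.erase_subset _ _)
          (fun i _ _ => mul_nonneg (hw i).le (Real.rpow_nonneg hx.le _))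
      have h2' : ∑ i, w i * x ^ (p M - 1) = W * x ^ (p M - 1) := by
        rw [hWdef, Finset.sum_mul]
      calc R ≤ _ := h1
        _ ≤ ∑ i, w i * x ^ (p M - 1) := h2
        _ = W * x ^ (p M - 1) := h2'
    have hz_le : z ≤ W * x ^ s := by
      rw [← hφ]
      calc ∑ i, w i * x ^ (p i - 1) ≤ ∑ i, w i * x ^ s := by
            refine Finset.sum_le_sum (fun i _ => ?_)
            have : p i ≤ p N := hpmono.monotone (by rw [Fin.le_def]; have := i.isLt; simp only [hNdef]; omega)
            exact mul_le_mul_of_nonneg_left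
              (Real.rpow_le_rpow_of_exponent_le hx1.le (by rw [hsdef]; linarith)) (hw i).le
        _ = W * x ^ s := by rw [← Finset.sum_mul]
    set u : ℝ := R / (w N * x ^ s) with hudef
    have hu0 : 0 ≤ u := by positivity
    have hzdiv : z / w N = x ^ s * (1 + u) := by
      rw [hsplit, hudef]; field_simp
    set v : ℝ := (1 + u) ^ (1 / s) with hvdef
    have hv0 : 0 < v := Real.rpow_pos_of_pos (by linarith) _
    have hv1 : v ≤ 1 := Real.rpow_le_one_of_one_le_of_nonpos (by linarith)
      (div_nonpos_of_nonneg_of_nonpos zero_le_one hs0.le)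
    have hxss : (x ^ s) ^ (1 / s) = x := by
      rw [← Real.rpow_mul hx.le, mul_one_div, div_self hsne, Real.rpow_one]
    have hI2eq : (z / w N) ^ (1 / s) = x * v := by
      rw [hzdiv, Real.mul_rpow hxs.le (by linarith), hxss]
    -- Bernoulli : v^s = 1 + u and 1 - v ≤ u
    have hvs : v ^ s = 1 + u := by
      rw [hvdef, ← Real.rpow_mul (by linarith), one_div, inv_mul_cancel₀ hsne,
        Real.rpow_one]
    have hkey : 1 - v ≤ u := by
      -- Bernoulli with exponent -s ≥ 1 at 1 + t, t = v⁻¹ - 1 ≥ 0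
      have ht : (-1 : ℝ) ≤ v⁻¹ - 1 := by
        have : (0:ℝ) < v⁻¹ := by positivity
        linarith
      have hb := one_add_mul_self_le_rpow_one_add ht (p := -s) (by linarith)
      have heq : (1 + (v⁻¹ - 1)) ^ (-s) = 1 + u := by
        have : (1 + (v⁻¹ - 1)) = v⁻¹ := by ring
        rw [this, ← Real.rpow_neg_one v, ← Real.rpow_mul hv0.le]
        rw [neg_one_mul, neg_neg, hvs]
      rw [heq] at hb
      have hvinv : 1 ≤ v⁻¹ := (one_le_inv₀ hv0).mpr hv1
      have h2 : 1 - v ≤ v⁻¹ - 1 := by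
        have := mul_pos hv0 hv0
        have hvv : v * v⁻¹ = 1 := mul_inv_cancel₀ hv0.ne'
        nlinarith
      nlinarith
    have hdiff : |x - (z / w N) ^ (1 / s)| = x * (1 - v) := by
      rw [hI2eq, abs_of_nonneg (by nlinarith)]
      ring
    have hxu : x * u ≤ (W / w N) * x ^ (1 + p M - p N) := by
      have h1 : x * u = R * (x / x ^ s) / w N := by
        rw [hudef]; field_simp
      have h2 : x / x ^ s = x ^ (1 - s) := by
        rw [Real.rpow_sub hx 1 s, Real.rpow_one]
      rw [h1, h2]
      have h3 : R * x ^ (1 - s) ≤ W * x ^ (p M - 1) * x ^ (1 - s) := by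
        exact mul_le_mul_of_nonneg_right hRle (by positivity)
      have h4 : W * x ^ (p M - 1) * x ^ (1 - s) = W * x ^ (1 + p M - p N) := by
        rw [mul_assoc, ← Real.rpow_add hx]
        congr 2
        rw [hsdef]; ring
      calc R * x ^ (1 - s) / w N ≤ W * x ^ (p M - 1) * x ^ (1 - s) / w N := by
            exact div_le_div_of_nonneg_right h3 hwN.le |>.trans_eq rfl
        _ = (W / w N) * x ^ (1 + p M - p N) := by rw [h4]; ring
    have hxb : x ^ (1 + p M - p N) ≤ x ^ β :=
      Real.rpow_le_rpow_of_exponent_le hx1.le (le_of_lt hβ2)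
    have hxβz : x ^ β ≤ z ^ (β / s) / W ^ (β / s) := by
      have h1 : z / W ≤ x ^ s := by
        rw [div_le_iff₀ hWpos]; linarith [hz_le]
      have h2 : (x ^ s) ^ (β / s) ≤ (z / W) ^ (β / s) :=
        Real.rpow_le_rpow_of_nonpos (by positivity) h1
          (div_nonpos_of_nonneg_of_nonpos hβ0 hs0.le)
      have h3 : (x ^ s) ^ (β / s) = x ^ β := by
        rw [← Real.rpow_mul hx.le]
        congr 1
        field_simp
      have h4 : (z / W) ^ (β / s) = z ^ (β / s) / W ^ (β / s) :=
        Real.div_rpow hz.le hWpos.le _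
      rw [h3, h4] at h2
      exact h2
    have hWβ : 0 < W ^ (β / s) := Real.rpow_pos_of_pos hWpos _
    have hfinal : x * (1 - v) ≤ (K - 1) * z ^ (β / s) := by
      have h0 : x * (1 - v) ≤ x * u := by nlinarith
      have h1 : (W / w N) * x ^ (1 + p M - p N) ≤ (W / w N) * x ^ β :=
        mul_le_mul_of_nonneg_left hxb (by positivity)
      have h2 : (W / w N) * x ^ β ≤ (W / w N) * (z ^ (β / s) / W ^ (β / s)) :=
        mul_le_mul_of_nonneg_left hxβz (by positivity)
      have h3 : (W / w N) * (z ^ (β / s) / W ^ (β / s)) = (K - 1) * z ^ (β / s) := by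
        rw [hKdef]; ring
      linarith
    rw [hdiff]
    have : (K - 1) * z ^ (β / s) ≤ K * (1 + z ^ (β / s)) := by nlinarith
    linarith
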